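/- Let J ⊆ ℝ be an interval, let b : J → ℝ be continuous, and let x₀, x₁ : J → ℝ be differentiable functions each solving the Abel equation dx/dt = (t + x) + b(t)(1 + t + x)³ on J, with x₀(t) ≠ −t−1 and x₁(t) ≠ −t−1 for all t ∈ J. Then the function t ↦ e^{2t}((x₀(t) + t + 1)^{−2} − (x₁(t) + t + 1)^{−2}) is constant on J. -/

import Mathlib

lemma abel_key (J : Set ℝ) (b x : ℝ → ℝ) (t : ℝ)
    (hd : HasDerivWithinAt x ((t + x t) + b t * (1 + t + x t) ^ 3) J t)
    (hne : x t + t + 1 ≠ 0) :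
    HasDerivWithinAt (fun t => Real.exp (2 * t) * (((x t + t + 1) ^ 2)⁻¹))
      (-2 * b t * Real.exp (2 * t)) J t := by
  have hu : HasDerivWithinAt (fun t => x t + t + 1)
      (((t + x t) + b t * (1 + t + x t) ^ 3) + 1) J t :=
    (hd.add (hasDerivWithinAt_id t J)).add_const 1
  have hu2 := hu.pow 2
  have hinv := hu2.inv (pow_ne_zero 2 hne)
  have hexp : HasDerivWithinAt (fun t => Real.exp (2 * t)) (Real.exp (2 * t) * 2) J t :=
    by simpa using ((hasDerivWithinAt_id t J).const_mul 2).exp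
  have := hexp.mul hinv
  convert this using 1
  all_goals try rfl
  simp only [Pi.inv_apply, Pi.pow_apply]
  field_simp
  ring

/-- Let `J ⊆ ℝ` be an interval, `b : J → ℝ` continuous, and let `x₀, x₁` be differentiable
solutions of the Abel equation `dx/dt = (t + x) + b(t)(1 + t + x)³` on `J`, with
`x₀(t) ≠ −t−1` and `x₁(t) ≠ −t−1` on `J`.  Then
`t ↦ e^{2t}((x₀(t) + t + 1)^{−2} − (x₁(t) + t + 1)^{−2})` is constant on `J`. -/
theorem abel_superposition_constant (J : Set ℝ) (hJ : J.OrdConnected)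
    (b : ℝ → ℝ) (hb : ContinuousOn b J) (x₀ x₁ : ℝ → ℝ)
    (h₀ : ∀ t ∈ J, HasDerivWithinAt x₀ ((t + x₀ t) + b t * (1 + t + x₀ t) ^ 3) J t)
    (h₁ : ∀ t ∈ J, HasDerivWithinAt x₁ ((t + x₁ t) + b t * (1 + t + x₁ t) ^ 3) J t)
    (hx₀ : ∀ t ∈ J, x₀ t ≠ -t - 1) (hx₁ : ∀ t ∈ J, x₁ t ≠ -t - 1) :
    ∀ s ∈ J, ∀ t ∈ J,
      Real.exp (2 * s) * (((x₀ s + s + 1) ^ 2)⁻¹ - ((x₁ s + s + 1) ^ 2)⁻¹)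
        = Real.exp (2 * t) * (((x₀ t + t + 1) ^ 2)⁻¹ - ((x₁ t + t + 1) ^ 2)⁻¹) := by
  intro s hs t ht
  set F : ℝ → ℝ := fun t =>
    Real.exp (2 * t) * (((x₀ t + t + 1) ^ 2)⁻¹)
      - Real.exp (2 * t) * (((x₁ t + t + 1) ^ 2)⁻¹) with hF
  have hder : ∀ u ∈ J, HasDerivWithinAt F 0 J u := by
    intro u hu
    have hn₀ : x₀ u + u + 1 ≠ 0 := by
      intro h; apply hx₀ u hu; linarith
    have hn₁ : x₁ u + u + 1 ≠ 0 := by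
      intro h; apply hx₁ u hu; linarith
    have := (abel_key J b x₀ u (h₀ u hu) hn₀).sub (abel_key J b x₁ u (h₁ u hu) hn₁)
    rw [sub_self] at this; exact this
  have hconv : Convex ℝ J := hJ.convex
  have := hconv.norm_image_sub_le_of_norm_hasDerivWithin_le
    (f' := fun _ => (0 : ℝ)) (C := 0) hder (fun u _ => by simp) hs ht
  have h0 : F t = F s := by
    have : ‖F t - F s‖ ≤ 0 := by simpa using this
    have := norm_le_zero_iff.mp this
    linarith [sub_eq_zero.mp this]
  simp only [hF] at h0
  ring_nf
  ring_nf at h0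
  linarith [h0]
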